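/- Let p be a prime and let g(x) = b_e x^e + ⋯ + b_0 ∈ ℚ[x] have degree e ≥ 1 with b_0 ≠ 0, ν_p(b_e) = 0, and ν_p(b_i) ≥ 1 for every 0 ≤ i ≤ e−1 with b_i ≠ 0; suppose NP_p(g) has successive vertices (0,0), (e−m_1, r_1), …, (e−m_{t−1}, r_{t−1}), (e, r_t), where e = m_0 > m_1 > ⋯ > m_t = 0 and r_i = ν_p(b_{m_i}), with slopes λ_i = (r_i − r_{i−1})/(m_{i−1} − m_i). Let f(x) = A_d x^d + ⋯ + A_0 ∈ ℚ[x] have degree d ≥ 1 with ν_p(A_d) = 0, let λ = min{ ν_p(A_i)/(d−i) : 0 ≤ i < d, A_i ≠ 0 } and assume λ ≥ λ_1, and assume either (i) r_t < λ_1(d+e−1), or (ii) r_t = λ_1(d+e−1) together with (f(0) = 0 or ν_p(f(0)) > dλ or λ > λ_1). Fix n ≥ 0 and suppose NP_p(g ∘ f^n) has successive vertices (0,0), (d^n(e−m_1), r_1), …, (d^n(e−m_{t−1}), r_{t−1}), (d^n e, r_t). Write (g ∘ f^{n+1})(x) = Σ_{k=0}^{d^{n+1}e} C_k x^k. Then for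 every 0 ≤ s < t and every integer k with 0 ≤ k ≤ d^{n+1} m_s and C_k ≠ 0, one has ν_p(C_k) ≥ r_{s+1} + λ_{s+1}·(m_{s+1} − k/d^{n+1}). -/

import Mathlib

open Polynomial

/-- The `n`-th compositional iterate of `f`: `f^0 = X`, `f^{n+1} = f ∘ f^n`. -/
noncomputable def polyIter (f : Polynomial ℚ) : ℕ → Polynomial ℚ
  | 0 => Polynomial.X
  | n + 1 => f.comp (polyIter f n)

/-- The `p`-adic valuation of a rational number, viewed as a rational number. -/
def nuQ (p : ℕ) (x : ℚ) : ℚ := (padicValRat p x : ℚ)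

/-- `NP_p(h)` has successive vertices `(xs 0, ys 0), …, (xs t, ys t)`:
the corresponding coefficients are nonzero and have the prescribed valuations,
the slopes are strictly increasing, and every point of the Newton diagram lies
on or above the polygon. -/
def HasNPVertices (p : ℕ) (h : Polynomial ℚ) (t : ℕ) (xs : ℕ → ℕ) (ys : ℕ → ℚ) : Prop :=
  h.coeff 0 ≠ 0 ∧
  xs 0 = 0 ∧ xs t = h.natDegree ∧
  (∀ s, s < t → xs s < xs (s + 1)) ∧
  (∀ s, s ≤ t → h.coeff (h.natDegree - xs s) ≠ 0 ∧
      nuQ p (h.coeff (h.natDegree - xs s)) = ys s) ∧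
  (∀ s, 1 ≤ s → s < t →
      (ys s - ys (s - 1)) / ((xs s : ℚ) - (xs (s - 1) : ℚ)) <
        (ys (s + 1) - ys s) / ((xs (s + 1) : ℚ) - (xs s : ℚ))) ∧
  (∀ s, 1 ≤ s → s ≤ t → ∀ i, h.coeff i ≠ 0 →
      xs (s - 1) ≤ h.natDegree - i → h.natDegree - i ≤ xs s →
      ys (s - 1) + ((ys s - ys (s - 1)) / ((xs s : ℚ) - (xs (s - 1) : ℚ))) *
          (((h.natDegree - i : ℕ) : ℚ) - (xs (s - 1) : ℚ)) ≤ nuQ p (h.coeff i))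

/-- The number of irreducible factors of a polynomial over `ℚ`,
counted with multiplicity. -/
noncomputable def numFactors (P : Polynomial ℚ) : ℕ :=
  (UniqueFactorizationMonoid.factors P).card

/-- `f` is `p^r`-pure. -/
def IsPpure (p r : ℕ) (f : Polynomial ℚ) : Prop :=
  f.coeff 0 ≠ 0 ∧
  padicValRat p f.leadingCoeff = 0 ∧
  padicValRat p (f.coeff 0) = (r : ℤ) ∧
  ∀ i, 0 < i → i < f.natDegree → f.coeff i ≠ 0 →
    (r : ℚ) / (f.natDegree : ℚ) ≤ nuQ p (f.coeff i) / ((f.natDegree : ℚ) - (i : ℚ))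


lemma nuQ_mul {p : ℕ} (hp : p.Prime) {a b : ℚ} (ha : a ≠ 0) (hb : b ≠ 0) :
    nuQ p (a * b) = nuQ p a + nuQ p b := by
  haveI : Fact p.Prime := ⟨hp⟩
  unfold nuQ
  rw [padicValRat.mul ha hb]
  push_cast
  ring

lemma nuQ_sum_le {p : ℕ} (hp : p.Prime) {ι : Type*} (S : Finset ι) (F : ι → ℚ) (c : ℚ)
    (hb : ∀ i ∈ S, F i ≠ 0 → c ≤ nuQ p (F i)) (hne : (∑ i ∈ S, F i) ≠ 0) :
    c ≤ nuQ p (∑ i ∈ S, F i) := by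
  haveI : Fact p.Prime := ⟨hp⟩
  classical
  induction S using Finset.cons_induction with
  | empty => simp at hne
  | cons a S ha IH =>
    rw [Finset.sum_cons] at hne ⊢
    by_cases hS : (∑ i ∈ S, F i) = 0
    · rw [hS, add_zero] at hne ⊢
      exact hb a (Finset.mem_cons_self a S) hne
    · by_cases hFa : F a = 0
      · rw [hFa, zero_add] at hne ⊢
        exact IH (fun i hi => hb i (Finset.mem_cons_of_mem hi)) hne
      · have h1 : c ≤ nuQ p (F a) := hb a (Finset.mem_cons_self a S) hFa
        have h2 : c ≤ nuQ p (∑ i ∈ S, F i) :=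
          IH (fun i hi => hb i (Finset.mem_cons_of_mem hi)) hS
        have h3 := padicValRat.min_le_padicValRat_add (p := p) hne
        unfold nuQ at *
        rcases le_total (padicValRat p (F a)) (padicValRat p (∑ i ∈ S, F i)) with h | h
        · rw [min_eq_left h] at h3
          exact h1.trans (by exact_mod_cast h3)
        · rw [min_eq_right h] at h3
          exact h2.trans (by exact_mod_cast h3)

lemma gauss_pow {p : ℕ} (hp : p.Prime) (f : Polynomial ℚ) (d : ℕ) (lam : ℚ)
    (hb : ∀ i, f.coeff i ≠ 0 → lam * ((d : ℚ) - i) ≤ nuQ p (f.coeff i)) :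
    ∀ (j i : ℕ), (f ^ j).coeff i ≠ 0 → lam * ((d : ℚ) * j - i) ≤ nuQ p ((f ^ j).coeff i) := by
  intro j
  induction j with
  | zero =>
    intro i hi
    rw [pow_zero, coeff_one] at hi ⊢
    rcases eq_or_ne i 0 with rfl | h
    · have h0 : nuQ p 1 = 0 := by unfold nuQ; rw [padicValRat.one]; norm_num
      norm_num [h0]
    · simp [h] at hi
  | succ j IH =>
    intro i hi
    rw [pow_succ, coeff_mul] at hi ⊢
    apply nuQ_sum_le hp _ _ _ _ hi
    intro x hx hxne
    have hab : x.1 + x.2 = i := Finset.HasAntidiagonal.mem_antidiagonal.mp hx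
    have h1 : (f ^ j).coeff x.1 ≠ 0 := left_ne_zero_of_mul hxne
    have h2 : f.coeff x.2 ≠ 0 := right_ne_zero_of_mul hxne
    rw [nuQ_mul hp h1 h2]
    have b1 := IH x.1 h1
    have b2 := hb x.2 h2
    have : (x.1 : ℚ) + x.2 = i := by exact_mod_cast congrArg (Nat.cast : ℕ → ℚ) hab
    have key : lam * ((d : ℚ) * (j + 1) - i) =
        lam * ((d : ℚ) * j - x.1) + lam * ((d : ℚ) - x.2) := by rw [← this]; ring
    push_cast
    push_cast at b1 b2 key
    linarith


section Arith
variable (t : ℕ) (mq R lam : ℕ → ℚ)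

/-- slopes are monotone -/
lemma lam_mono (hmono : ∀ v, 1 ≤ v → v < t → lam v ≤ lam (v + 1)) :
    ∀ v w, 1 ≤ v → v ≤ w → w ≤ t → lam v ≤ lam w := by
  intro v w hv hvw hwt
  induction w, hvw using Nat.le_induction with
  | base => exact le_refl _
  | succ w hw IH =>
    exact (IH (le_of_lt hwt)).trans (hmono w (hv.trans hw) hwt)

/-- R v ≥ lam 1 * (mq 0 - mq v) -/
lemma R_lower (hR0 : R 0 = 0)
    (hstep : ∀ v, v < t → R (v + 1) - R v = lam (v + 1) * (mq v - mq (v + 1)))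
    (hmono : ∀ v, 1 ≤ v → v < t → lam v ≤ lam (v + 1))
    (hgap : ∀ v, v < t → mq (v + 1) ≤ mq v) :
    ∀ v, v ≤ t → lam 1 * (mq 0 - mq v) ≤ R v := by
  intro v hv
  induction v with
  | zero => simp [hR0]
  | succ v IH =>
    have hvt : v < t := hv
    have h1 := hstep v hvt
    have h2 : lam 1 ≤ lam (v + 1) :=
      lam_mono t lam hmono 1 (v + 1) le_rfl (by omega) hv
    have h3 := hgap v hvt
    have h4 := IH (by omega)
    nlinarith [mul_le_mul_of_nonneg_right h2 (by linarith : (0:ℚ) ≤ mq v - mq (v+1))]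

/-- R w - R v ≥ lam (v+1) * (mq v - mq w) for v ≤ w -/
lemma R_upper
    (hstep : ∀ v, v < t → R (v + 1) - R v = lam (v + 1) * (mq v - mq (v + 1)))
    (hmono : ∀ v, 1 ≤ v → v < t → lam v ≤ lam (v + 1))
    (hgap : ∀ v, v < t → mq (v + 1) ≤ mq v) :
    ∀ v w, v ≤ w → w ≤ t → lam (v + 1) * (mq v - mq w) ≤ R w - R v := by
  intro v w hvw hwt
  induction w, hvw using Nat.le_induction with
  | base => simp
  | succ w hw IH =>
    have hwt' : w < t := hwt
    have h1 := hstep w hwt'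
    have h2 : lam (v + 1) ≤ lam (w + 1) :=
      lam_mono t lam hmono (v + 1) (w + 1) (by omega) (by omega) hwt
    have h3 := hgap w hwt'
    have h4 := IH (le_of_lt hwt')
    nlinarith [mul_le_mul_of_nonneg_right h2 (by linarith : (0:ℚ) ≤ mq w - mq (w+1))]

/-- all slopes are at most d * lam 1 -/
lemma lam_le_d (dq : ℚ) (hd : 1 ≤ dq) (hl1 : 0 ≤ lam 1)
    (hR0 : R 0 = 0) (hmqt : mq t = 0)
    (hstep : ∀ v, v < t → R (v + 1) - R v = lam (v + 1) * (mq v - mq (v + 1)))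
    (hmono : ∀ v, 1 ≤ v → v < t → lam v ≤ lam (v + 1))
    (hgap : ∀ v, v < t → mq (v + 1) + 1 ≤ mq v)
    (hrt : R t ≤ lam 1 * (dq + mq 0 - 1)) :
    ∀ v, v < t → lam (v + 1) ≤ lam 1 * dq := by
  intro v hv
  have hgap' : ∀ v, v < t → mq (v + 1) ≤ mq v := fun v hv => by linarith [hgap v hv]
  have hmv : 1 ≤ mq v := by
    -- mq v ≥ mq (t-1) ≥ mq t + 1 = 1; prove mq w ≥ mq t + (indicator) : simpler:
    -- mq v ≥ mq (v+1) + 1 ≥ mq t + 1 = 1 by anti-monotonicity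
    have anti : ∀ a b, a ≤ b → b ≤ t → mq b ≤ mq a := by
      intro a b hab hbt
      induction b, hab using Nat.le_induction with
      | base => exact le_refl _
      | succ b hb IH => exact (hgap' b hbt).trans (IH (le_of_lt hbt))
    have := anti (v + 1) t hv (le_refl t)
    have := hgap v hv
    rw [hmqt] at *
    linarith
  have h1 := R_lower t mq R lam hR0 hstep hmono hgap' v (le_of_lt hv)
  have h2 := R_upper t mq R lam hstep hmono hgap' v t (le_of_lt hv) (le_refl t)
  rw [hmqt] at h2
  -- lam (v+1) * mq v ≤ R t - R v ≤ lam 1 * (dq - 1 + mq v) ≤ lam 1 * dq * mq v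
  have h3 : lam (v + 1) * mq v ≤ lam 1 * (dq - 1 + mq v) := by linarith
  have h4 : lam 1 * (dq - 1 + mq v) ≤ lam 1 * dq * mq v := by nlinarith [mul_nonneg hl1 (by nlinarith : (0:ℚ) ≤ (dq - 1) * (mq v - 1))]
  have h5 : lam (v + 1) * mq v ≤ lam 1 * dq * mq v := h3.trans h4
  have hmv0 : 0 < mq v := by linarith
  exact le_of_mul_le_mul_right h5 hmv0

/-- walking along extended segment lines: increasing index raises the line left of vertex -/
lemma line_W1
    (hstep : ∀ v, v < t → R (v + 1) - R v = lam (v + 1) * (mq v - mq (v + 1)))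
    (hmono : ∀ v, 1 ≤ v → v < t → lam v ≤ lam (v + 1))
    (hgap : ∀ v, v < t → mq (v + 1) ≤ mq v)
    (K : ℚ) :
    ∀ s u, s ≤ u → u < t → K ≤ mq u →
      R s + lam (s + 1) * (mq s - K) ≤ R u + lam (u + 1) * (mq u - K) := by
  intro s u hsu hut hK
  induction u, hsu using Nat.le_induction with
  | base => exact le_refl _
  | succ u hu IH =>
    have hut' : u < t := by omega
    have hK' : K ≤ mq u := hK.trans (hgap u hut')
    have h1 := IH hut' hK'
    have h2 := hstep u hut'
    have h3 : lam (u + 1) ≤ lam (u + 2) := hmono (u + 1) (by omega) hut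
    -- R u + lam (u+1) (mq u - K) ≤ R (u+1) + lam (u+2) (mq (u+1) - K)
    -- difference = (lam (u+2) - lam (u+1)) * (mq (u+1) - K) ≥ 0
    nlinarith [mul_le_mul_of_nonneg_right h3 (by linarith : (0:ℚ) ≤ mq (u+1) - K)]

/-- walking: decreasing index raises the line right of vertex -/
lemma line_W2
    (hstep : ∀ v, v < t → R (v + 1) - R v = lam (v + 1) * (mq v - mq (v + 1)))
    (hmono : ∀ v, 1 ≤ v → v < t → lam v ≤ lam (v + 1))
    (hgap : ∀ v, v < t → mq (v + 1) ≤ mq v)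
    (J : ℚ) :
    ∀ u s, u ≤ s → s < t → mq (u + 1) ≤ J →
      R s + lam (s + 1) * (mq s - J) ≤ R u + lam (u + 1) * (mq u - J) := by
  intro u s hus hst hJ
  induction s, hus using Nat.le_induction with
  | base => exact le_refl _
  | succ s hs IH =>
    have hst' : s < t := by omega
    have h1 := IH hst'
    have h2 := hstep s hst'
    have h3 : lam (s + 1) ≤ lam (s + 2) := hmono (s + 1) (by omega) hst
    have anti : ∀ a b, a ≤ b → b ≤ t → mq b ≤ mq a := by
      intro a b hab hbt
      induction b, hab using Nat.le_induction with
      | base => exact le_refl _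
      | succ b hb IH2 => exact (hgap b hbt).trans (IH2 (le_of_lt hbt))
    have hJ' : mq (s + 1) ≤ J := le_trans (anti (u+1) (s+1) (by omega) (by omega)) hJ
    nlinarith [mul_le_mul_of_nonneg_right h3 (by linarith : (0:ℚ) ≤ J - mq (s+1))]

/-- core per-term inequality -/
lemma core_ineq (lamw : ℚ)
    (hstep : ∀ v, v < t → R (v + 1) - R v = lam (v + 1) * (mq v - mq (v + 1)))
    (hmono : ∀ v, 1 ≤ v → v < t → lam v ≤ lam (v + 1))
    (hgap : ∀ v, v < t → mq (v + 1) ≤ mq v)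
    (s u : ℕ) (hs : s < t) (hu : u < t)
    (hw1 : lam (u + 1) ≤ lamw) (hw2 : lam (s + 1) ≤ lamw)
    (K J : ℚ) (hKs : K ≤ mq s) (hKJ : K ≤ J) (hJl : mq (u + 1) ≤ J) (hJu : J ≤ mq u) :
    R s + lam (s + 1) * (mq s - K) ≤
      R u + lam (u + 1) * (mq u - J) + lamw * (J - K) := by
  rcases le_or_gt s u with h | h
  · have hKu : K ≤ mq u := hKJ.trans hJu
    have w1 := line_W1 t mq R lam hstep hmono hgap K s u h hu hKu
    nlinarith [mul_le_mul_of_nonneg_right hw1 (by linarith : (0:ℚ) ≤ J - K)]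
  · have w2 := line_W2 t mq R lam hstep hmono hgap J u s (by omega) hs hJl
    nlinarith [mul_le_mul_of_nonneg_right hw2 (by linarith : (0:ℚ) ≤ J - K)]

end Arith


lemma polyIter_succ_right (f : Polynomial ℚ) (n : ℕ) :
    polyIter f (n + 1) = (polyIter f n).comp f := by
  induction n with
  | zero => show f.comp X = X.comp f; rw [comp_X, X_comp]
  | succ n IH =>
    show f.comp (polyIter f (n + 1)) = (f.comp (polyIter f n)).comp f
    rw [IH, Polynomial.comp_assoc]

lemma exists_segment (M : ℕ → ℕ) (j : ℕ) :
    ∀ t : ℕ, 1 ≤ t → M t ≤ j → j ≤ M 0 → ∃ u, u < t ∧ M (u + 1) ≤ j ∧ j ≤ M u := by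
  intro t
  induction t with
  | zero => omega
  | succ t IH =>
    intro _ h1 h2
    rcases Nat.eq_zero_or_pos t with rfl | ht
    · exact ⟨0, by omega, h1, h2⟩
    · rcases le_or_gt (M t) j with h | h
      · obtain ⟨u, hu, h3, h4⟩ := IH ht h h2
        exact ⟨u, by omega, h3, h4⟩
      · exact ⟨t, by omega, h1, le_of_lt h⟩

lemma comp_coeff_eq_sum (h f : Polynomial ℚ) (k : ℕ) :
    (h.comp f).coeff k = ∑ j ∈ h.support, h.coeff j * (f ^ j).coeff k := by
  rw [comp_eq_sum_left, Polynomial.sum_def, finset_sum_coeff]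
  simp only [coeff_C_mul]

set_option maxHeartbeats 1000000 in
/-- Lemma 2.4. -/
theorem valuation_lower_bound_of_next_iterate
    (p : ℕ) (hp : p.Prime)
    (g f : Polynomial ℚ) (e d t : ℕ) (m : ℕ → ℕ)
    (hge : g.natDegree = e) (he1 : 1 ≤ e)
    (hb0 : g.coeff 0 ≠ 0)
    (hbe : padicValRat p (g.coeff e) = 0)
    (hbi : ∀ i, i < e → g.coeff i ≠ 0 → 1 ≤ padicValRat p (g.coeff i))
    (hm0 : m 0 = e) (hmt : m t = 0)
    (hmdec : ∀ s, s < t → m (s + 1) < m s)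
    (hNPg : HasNPVertices p g t (fun s => e - m s) (fun s => nuQ p (g.coeff (m s))))
    (hfd : f.natDegree = d) (hd1 : 1 ≤ d)
    (had : padicValRat p (f.coeff d) = 0)
    (lam : ℚ)
    (hlam : IsLeast {q : ℚ | ∃ i, i < d ∧ f.coeff i ≠ 0 ∧
      q = nuQ p (f.coeff i) / ((d : ℚ) - (i : ℚ))} lam)
    (lam1 : ℚ)
    (hlam1 : lam1 = nuQ p (g.coeff (m 1)) / ((e : ℚ) - (m 1 : ℚ)))
    (hlamge : lam1 ≤ lam)
    (hcase :
      nuQ p (g.coeff 0) < lam1 * ((d : ℚ) + (e : ℚ) - 1) ∨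
      (nuQ p (g.coeff 0) = lam1 * ((d : ℚ) + (e : ℚ) - 1) ∧
        (f.eval 0 = 0 ∨ (d : ℚ) * lam < nuQ p (f.eval 0) ∨ lam1 < lam)))
    (n : ℕ)
    (hNPn : HasNPVertices p (g.comp (polyIter f n)) t
      (fun s => d ^ n * (e - m s)) (fun s => nuQ p (g.coeff (m s)))) :
    ∀ s, s < t → ∀ k : ℕ, k ≤ d ^ (n + 1) * m s →
      (g.comp (polyIter f (n + 1))).coeff k ≠ 0 →
      nuQ p (g.coeff (m (s + 1))) +
          ((nuQ p (g.coeff (m (s + 1))) - nuQ p (g.coeff (m s))) /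
            ((m s : ℚ) - (m (s + 1) : ℚ))) *
            ((m (s + 1) : ℚ) - (k : ℚ) / (d : ℚ) ^ (n + 1)) ≤
        nuQ p ((g.comp (polyIter f (n + 1))).coeff k) := by
  intro s hst k hk hCk
  haveI : Fact p.Prime := ⟨hp⟩
  have ht1 : 1 ≤ t := by omega
  have manti : ∀ a b, a ≤ b → b ≤ t → m b ≤ m a := by
    intro a b hab hbt
    induction b, hab using Nat.le_induction with
    | base => exact le_refl _
    | succ b hb IH => exact le_of_lt (lt_of_lt_of_le (hmdec b hbt) (IH (le_of_lt hbt)))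
  have mle : ∀ v, v ≤ t → m v ≤ e := by
    intro v hv
    have := manti 0 v (Nat.zero_le v) hv
    omega
  set mq : ℕ → ℚ := fun v => (m v : ℚ) with hmq
  set R : ℕ → ℚ := fun v => nuQ p (g.coeff (m v)) with hRdef
  set lamS : ℕ → ℚ := fun v => (R v - R (v - 1)) / (mq (v - 1) - mq v) with hlamSdef
  have hgapq : ∀ v, v < t → mq (v + 1) + 1 ≤ mq v := by
    intro v hv
    have h := hmdec v hv
    simp only [hmq]
    exact_mod_cast h
  have hgapq' : ∀ v, v < t → mq (v + 1) ≤ mq v := fun v hv => by linarith [hgapq v hv]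
  -- step identity
  have hstep : ∀ v, v < t → R (v + 1) - R v = lamS (v + 1) * (mq v - mq (v + 1)) := by
    intro v hv
    have hne : mq v - mq (v + 1) ≠ 0 := by
      have := hgapq v hv; intro h; rw [sub_eq_zero] at h; rw [h] at this; linarith
    simp only [hlamSdef, Nat.add_sub_cancel]
    rw [div_mul_cancel₀ _ hne]
  -- unpack hNPg
  obtain ⟨hg0, hgxs0, hgxst, hgxinc, hgvert, hgslope, hgbound⟩ := hNPg
  -- R 0 = 0
  have hR0 : R 0 = 0 := by
    simp only [hRdef, hm0, nuQ, hbe]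
    norm_num
  have hmq0 : mq 0 = (e : ℚ) := by simp [hmq, hm0]
  have hmqt : mq t = 0 := by simp [hmq, hmt]
  -- slope monotonicity from hNPg
  have hmono : ∀ v, 1 ≤ v → v < t → lamS v ≤ lamS (v + 1) := by
    intro v h1v hvt
    have A := hgslope v h1v hvt
    simp only at A
    have c1 : ((e - m v : ℕ) : ℚ) = (e : ℚ) - mq v := by
      have := mle v (by omega); simp [hmq]; push_cast [Nat.cast_sub this]; ring
    have c2 : ((e - m (v - 1) : ℕ) : ℚ) = (e : ℚ) - mq (v - 1) := by
      have := mle (v - 1) (by omega); simp [hmq]; push_cast [Nat.cast_sub this]; ring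
    have c3 : ((e - m (v + 1) : ℕ) : ℚ) = (e : ℚ) - mq (v + 1) := by
      have := mle (v + 1) (by omega); simp [hmq]; push_cast [Nat.cast_sub this]; ring
    rw [c1, c2, c3] at A
    have e1 : (e : ℚ) - mq v - ((e : ℚ) - mq (v - 1)) = mq (v - 1) - mq v := by ring
    have e2 : (e : ℚ) - mq (v + 1) - ((e : ℚ) - mq v) = mq v - mq (v + 1) := by ring
    rw [e1, e2] at A
    have : lamS v < lamS (v + 1) := by
      simp only [hlamSdef, Nat.add_sub_cancel]
      exact A
    linarith
  -- lam1 = lamS 1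
  have hm1lt : m 1 < e := by have h := hmdec 0 ht1; norm_num at h; omega
  have hlam1eq : lamS 1 = lam1 := by
    have h : lamS 1 = (R 1 - R 0) / (mq 0 - mq 1) := by simp only [hlamSdef]
    rw [h, hR0, hmq0, sub_zero, hlam1]
  -- coefficient at m 1 is nonzero and has valuation ≥ 1
  have hcm1 : g.coeff (m 1) ≠ 0 := by
    have := (hgvert 1 ht1).1
    simp only at this
    have harith : g.natDegree - (e - m 1) = m 1 := by
      rw [hge]; omega
    rwa [harith] at this
  have hR1ge : (1 : ℚ) ≤ R 1 := by
    have := hbi (m 1) hm1lt hcm1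
    simp only [hRdef, nuQ]
    exact_mod_cast this
  have hl1pos : 0 ≤ lamS 1 := by
    rw [hlam1eq, hlam1]
    apply div_nonneg
    · have : nuQ p (g.coeff (m 1)) = R 1 := rfl
      rw [this]; linarith
    · have : (m 1 : ℚ) < (e : ℚ) := by exact_mod_cast hm1lt
      linarith
  have hlam1nonneg : 0 ≤ lam1 := hlam1eq ▸ hl1pos
  have hlamnonneg : 0 ≤ lam := le_trans hlam1nonneg hlamge
  -- r_t bound
  have hdq1 : (1 : ℚ) ≤ (d : ℚ) := by exact_mod_cast hd1
  have hrt : R t ≤ lamS 1 * ((d : ℚ) + mq 0 - 1) := by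
    rw [hlam1eq, hmq0]
    have hR : R t = nuQ p (g.coeff 0) := by simp [hRdef, hmt]
    rw [hR]
    rcases hcase with h | ⟨h, _⟩
    · linarith
    · linarith [h.le]
  have hlamd : ∀ v, v < t → lamS (v + 1) ≤ lam1 * (d : ℚ) := by
    intro v hv
    have := lam_le_d t mq R lamS (d : ℚ) hdq1 hl1pos hR0 hmqt hstep hmono hgapq hrt v hv
    rwa [hlam1eq] at this
  -- polynomial facts
  have hf0 : f ≠ 0 := by
    intro h
    rw [h, natDegree_zero] at hfd
    omega
  have hbQ : ∀ i, f.coeff i ≠ 0 → lam * ((d : ℚ) - i) ≤ nuQ p (f.coeff i) := by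
    intro i hi
    rcases lt_trichotomy i d with h | heq | h
    · have hmem : nuQ p (f.coeff i) / ((d : ℚ) - i) ∈ {q : ℚ | ∃ i, i < d ∧ f.coeff i ≠ 0 ∧
          q = nuQ p (f.coeff i) / ((d : ℚ) - (i : ℚ))} := ⟨i, h, hi, rfl⟩
      have hle := hlam.2 hmem
      have hpos : (0 : ℚ) < (d : ℚ) - i := by
        have : (i : ℚ) < (d : ℚ) := by exact_mod_cast h
        linarith
      rw [le_div_iff₀ hpos] at hle
      linarith
    · subst heq
      have hv0 : nuQ p (f.coeff i) = 0 := by simp [nuQ, had]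
      rw [hv0]
      simp
    · exfalso
      exact hi (coeff_eq_zero_of_natDegree_lt (by omega))
  have gauss := gauss_pow hp f d lam hbQ
  -- the composition
  set hpoly : Polynomial ℚ := g.comp (polyIter f n) with hhpoly
  obtain ⟨hn0, hnxs0, hnxst, hnxinc, hnvert, hnslope, hnbound⟩ := hNPn
  have hD : hpoly.natDegree = d ^ n * e := by
    simp only at hnxst
    rw [← hnxst, hmt, Nat.sub_zero]
  have hcompeq : g.comp (polyIter f (n + 1)) = hpoly.comp f := by
    rw [polyIter_succ_right, hhpoly, Polynomial.comp_assoc]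
  rw [hcompeq] at hCk ⊢
  rw [comp_coeff_eq_sum] at hCk ⊢
  -- target value
  have goalT : nuQ p (g.coeff (m (s + 1))) +
      (nuQ p (g.coeff (m (s + 1))) - nuQ p (g.coeff (m s))) / ((m s : ℚ) - (m (s + 1) : ℚ)) *
        ((m (s + 1) : ℚ) - (k : ℚ) / (d : ℚ) ^ (n + 1)) =
      R s + lamS (s + 1) * (mq s - (k : ℚ) / (d : ℚ) ^ (n + 1)) := by
    have h1 := hstep s hst
    have h2 : lamS (s + 1) = (nuQ p (g.coeff (m (s + 1))) - nuQ p (g.coeff (m s))) /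
        ((m s : ℚ) - (m (s + 1) : ℚ)) := by
      simp only [hlamSdef, Nat.add_sub_cancel, hRdef, hmq]
    have h3 : R (s + 1) = nuQ p (g.coeff (m (s + 1))) := rfl
    have h6 : mq (s + 1) = (m (s + 1) : ℚ) := rfl
    rw [← h2, ← h3, ← h6]
    linarith [h1]
  rw [goalT]
  apply nuQ_sum_le hp _ _ _ _ hCk
  intro j hj hterm
  have h1 : hpoly.coeff j ≠ 0 := left_ne_zero_of_mul hterm
  have h2 : (f ^ j).coeff k ≠ 0 := right_ne_zero_of_mul hterm
  have hjD : j ≤ hpoly.natDegree := le_natDegree_of_ne_zero h1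
  have hkjd : k ≤ j * d := by
    by_contra hlt
    push_neg at hlt
    have hdeg : (f ^ j).natDegree = j * d := by
      rw [natDegree_pow' (pow_ne_zero j (leadingCoeff_ne_zero.mpr hf0)), hfd]
    exact h2 (coeff_eq_zero_of_natDegree_lt (by omega))
  -- find the segment
  obtain ⟨u, hu, hseg1, hseg2⟩ := exists_segment (fun v => d ^ n * m v) j t ht1
    (by simp [hmt]) (by show j ≤ d ^ n * m 0; rw [hm0, ← hD]; exact hjD)
  -- Newton polygon bound on hpoly.coeff j
  have hdn1 : 1 ≤ d ^ n := Nat.one_le_pow n d (by omega)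
  have hmue : m u ≤ e := mle u (by omega)
  have hmu1e : m (u + 1) ≤ e := mle (u + 1) (by omega)
  have hsplit_u : d ^ n * e = d ^ n * (e - m u) + d ^ n * m u := by
    rw [← Nat.mul_add, Nat.sub_add_cancel hmue]
  have hsplit_u1 : d ^ n * e = d ^ n * (e - m (u + 1)) + d ^ n * m (u + 1) := by
    rw [← Nat.mul_add, Nat.sub_add_cancel hmu1e]
  have hjD' : j ≤ d ^ n * e := by rw [← hD]; exact hjD
  have hNB := hnbound (u + 1) (by omega) (by omega) j h1
    (by simp only [Nat.add_sub_cancel]; rw [hD]; omega)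
    (by simp only; rw [hD]; omega)
  simp only [Nat.add_sub_cancel] at hNB
  -- rewrite the bound in ℚ form
  have hdpos : (0 : ℚ) < (d : ℚ) := by linarith
  set nq : ℚ := (d : ℚ) ^ n with hnq
  have hnqpos : (0 : ℚ) < nq := pow_pos hdpos n
  set J : ℚ := (j : ℚ) / nq with hJ
  set K : ℚ := (k : ℚ) / (d : ℚ) ^ (n + 1) with hK
  have hcastu : ((d ^ n * (e - m u) : ℕ) : ℚ) = nq * ((e : ℚ) - mq u) := by
    push_cast [Nat.cast_sub hmue]
    simp [hnq, hmq]
  have hcastu1 : ((d ^ n * (e - m (u + 1)) : ℕ) : ℚ) = nq * ((e : ℚ) - mq (u + 1)) := by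
    push_cast [Nat.cast_sub hmu1e]
    simp [hnq, hmq]
  have hcastD : ((hpoly.natDegree - j : ℕ) : ℚ) = nq * (e : ℚ) - (j : ℚ) := by
    rw [hD]
    push_cast [Nat.cast_sub hjD']
    simp [hnq]
  rw [hcastu, hcastu1, hcastD] at hNB
  have hlamu : lamS (u + 1) = (R (u + 1) - R u) / (mq u - mq (u + 1)) := by
    simp only [hlamSdef, Nat.add_sub_cancel]
  have hdenom : (0 : ℚ) < mq u - mq (u + 1) := by linarith [hgapq u hu]
  have hNB2 : R u + lamS (u + 1) * (mq u - J) ≤ nuQ p (hpoly.coeff j) := by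
    have heq : (R (u + 1) - R u) / (nq * ((e : ℚ) - mq (u + 1)) - nq * ((e : ℚ) - mq u)) *
        (nq * (e : ℚ) - (j : ℚ) - nq * ((e : ℚ) - mq u)) =
        lamS (u + 1) * (mq u - J) := by
      have hd0 : nq * ((e : ℚ) - mq (u + 1)) - nq * ((e : ℚ) - mq u) =
          nq * (mq u - mq (u + 1)) := by ring
      have hnum : nq * (e : ℚ) - (j : ℚ) - nq * ((e : ℚ) - mq u) = nq * mq u - j := by ring
      rw [hd0, hnum, hlamu, hJ]
      field_simp
    calc R u + lamS (u + 1) * (mq u - J)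
        = R u + (R (u + 1) - R u) / (nq * ((e : ℚ) - mq (u + 1)) - nq * ((e : ℚ) - mq u)) *
          (nq * (e : ℚ) - (j : ℚ) - nq * ((e : ℚ) - mq u)) := by rw [heq]
      _ ≤ nuQ p (hpoly.coeff j) := hNB
  -- bounds on J and K
  have hJl : mq (u + 1) ≤ J := by
    rw [hJ, le_div_iff₀ hnqpos]
    have : ((d ^ n * m (u + 1) : ℕ) : ℚ) ≤ (j : ℚ) := by exact_mod_cast hseg1
    push_cast at this
    simp only [hmq, hnq]
    linarith
  have hJu : J ≤ mq u := by
    rw [hJ, div_le_iff₀ hnqpos]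
    have : ((j : ℕ) : ℚ) ≤ ((d ^ n * m u : ℕ) : ℚ) := by exact_mod_cast hseg2
    push_cast at this
    simp only [hmq, hnq]
    linarith
  have hdpow1pos : (0 : ℚ) < (d : ℚ) ^ (n + 1) := pow_pos hdpos (n + 1)
  have hKJ : K ≤ J := by
    rw [hK, hJ, div_le_div_iff₀ hdpow1pos hnqpos]
    have hkq : (k : ℚ) ≤ (j : ℚ) * (d : ℚ) := by exact_mod_cast hkjd
    have : (d : ℚ) ^ (n + 1) = nq * (d : ℚ) := by rw [hnq, pow_succ]
    rw [this]
    nlinarith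
  have hKs : K ≤ mq s := by
    rw [hK, div_le_iff₀ hdpow1pos]
    have : ((k : ℕ) : ℚ) ≤ ((d ^ (n + 1) * m s : ℕ) : ℚ) := by exact_mod_cast hk
    push_cast at this
    simp only [hmq]
    linarith
  -- the lamw weight
  set lamw : ℚ := max (lamS (u + 1)) (lamS (s + 1)) with hlamw
  have hlamwle : lamw ≤ lam1 * (d : ℚ) := max_le (hlamd u hu) (hlamd s hst)
  have hlamwle2 : lamw ≤ lam * (d : ℚ) ^ (n + 1) := by
    have h1 : lam1 * (d : ℚ) ≤ lam * (d : ℚ) := by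
      apply mul_le_mul_of_nonneg_right hlamge (by linarith)
    have h2 : lam * (d : ℚ) ≤ lam * (d : ℚ) ^ (n + 1) := by
      apply mul_le_mul_of_nonneg_left _ hlamnonneg
      calc (d : ℚ) = (d : ℚ) ^ 1 := (pow_one _).symm
        _ ≤ (d : ℚ) ^ (n + 1) := pow_le_pow_right₀ hdq1 (by omega)
    linarith
  -- the valuation of the power coefficient
  have hg2 : lam * ((d : ℚ) * j - k) ≤ nuQ p ((f ^ j).coeff k) := gauss j k h2
  have hdjk : (0 : ℚ) ≤ (d : ℚ) * j - k := by
    have : (k : ℚ) ≤ (j : ℚ) * (d : ℚ) := by exact_mod_cast hkjd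
    linarith
  have hlw : lamw * (J - K) ≤ lam * ((d : ℚ) * j - k) := by
    have heq : lamw * (J - K) = (lamw / (d : ℚ) ^ (n + 1)) * ((d : ℚ) * j - k) := by
      rw [hJ, hK, hnq]
      field_simp
      ring
    rw [heq]
    apply mul_le_mul_of_nonneg_right _ hdjk
    rw [div_le_iff₀ hdpow1pos]
    · linarith
  -- combine
  have hcore := core_ineq t mq R lamS lamw hstep hmono hgapq' s u hst hu
    (le_max_left _ _) (le_max_right _ _) K J hKs hKJ hJl hJu
  have hmul := nuQ_mul hp h1 h2
  rw [hmul]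
  calc R s + lamS (s + 1) * (mq s - K)
      ≤ R u + lamS (u + 1) * (mq u - J) + lamw * (J - K) := hcore
    _ ≤ nuQ p (hpoly.coeff j) + lam * ((d : ℚ) * j - k) := by linarith
    _ ≤ nuQ p (hpoly.coeff j) + nuQ p ((f ^ j).coeff k) := by linarith
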